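/- arXiv:1712.06622 — 2 statements merged into one kernel-verified Lean document; each statement's English description precedes it below -/
import Mathlib

section
/- Let k ≥ 1 be an integer and let a, b, c, d be real polynomials of degree k whose leading coefficients a_k, b_k, c_k, d_k are all positive. Define f(n) = a(n+1)d(n+1) − (2 b_k / a_k) b(n+1) c(n+1) − (a_k / (2 b_k)) b(n+1) d(n+1). Let m ≥ 2 be an integer such that b(n), c(n), d(n) and f(n) are positive for all integers n ≥ m. Suppose x : ℕ → ℝ satisfies x(n) ≥ (a(n)/b(n)) x(n−1) − (c(n)/d(n)) x(n−2) for all n ≥ m, and suppose x(m−1) > 0 and x(m)/x(m−1) > a_k/(2 b_k). Then x(n−1) > 0 and x(n)/x(n−1) > a_k/(2 b_k) for every integer n ≥ m. -/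
/-- Ratio-bound theorem for solutions of a second-order linear difference inequality
with polynomial coefficients (Theorem 2 of Appendix A). -/
theorem stmt_0 (k : ℕ) (hk : 1 ≤ k) (a b c d : Polynomial ℝ)
    (hadeg : a.natDegree = k) (hbdeg : b.natDegree = k)
    (hcdeg : c.natDegree = k) (hddeg : d.natDegree = k)
    (hapos : 0 < a.leadingCoeff) (hbpos : 0 < b.leadingCoeff)
    (hcpos : 0 < c.leadingCoeff) (hdpos : 0 < d.leadingCoeff)
    (f : ℕ → ℝ)
    (hf : ∀ n : ℕ, f n =
      a.eval ((n : ℝ) + 1) * d.eval ((n : ℝ) + 1)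
      - (2 * b.leadingCoeff / a.leadingCoeff) * (b.eval ((n : ℝ) + 1) * c.eval ((n : ℝ) + 1))
      - (a.leadingCoeff / (2 * b.leadingCoeff)) * (b.eval ((n : ℝ) + 1) * d.eval ((n : ℝ) + 1)))
    (m : ℕ) (hm : 2 ≤ m)
    (hpos : ∀ n : ℕ, m ≤ n →
      0 < b.eval (n : ℝ) ∧ 0 < c.eval (n : ℝ) ∧ 0 < d.eval (n : ℝ) ∧ 0 < f n)
    (x : ℕ → ℝ)
    (hx : ∀ n : ℕ, m ≤ n →
      x n ≥ (a.eval (n : ℝ) / b.eval (n : ℝ)) * x (n - 1)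
            - (c.eval (n : ℝ) / d.eval (n : ℝ)) * x (n - 2))
    (hinit : 0 < x (m - 1))
    (hratio : x m / x (m - 1) > a.leadingCoeff / (2 * b.leadingCoeff)) :
    ∀ n : ℕ, m ≤ n →
      0 < x (n - 1) ∧ x n / x (n - 1) > a.leadingCoeff / (2 * b.leadingCoeff) := by
  set r : ℝ := a.leadingCoeff / (2 * b.leadingCoeff) with hrdef
  have hr : 0 < r := div_pos hapos (by positivity)
  have key : ∀ n : ℕ, m ≤ n → 0 < x (n - 1) ∧ r * x (n - 1) < x n := by
    intro n hn
    induction n, hn using Nat.le_induction with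
    | base => exact ⟨hinit, (lt_div_iff₀ hinit).mp hratio⟩
    | succ n hn ih =>
      obtain ⟨h1, h2⟩ := ih
      have hxn : 0 < x n := lt_trans (mul_pos hr h1) h2
      have hs1 : n + 1 - 1 = n := by omega
      have hs2 : n + 1 - 2 = n - 1 := by omega
      refine ⟨by rwa [hs1], ?_⟩
      rw [hs1]
      have hxineq := hx (n + 1) (by omega)
      rw [hs1, hs2] at hxineq
      obtain ⟨hb1, hc1, hd1, _⟩ := hpos (n + 1) (by omega)
      obtain ⟨_, _, _, hfn⟩ := hpos n hn
      push_cast at hxineq hb1 hc1 hd1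
      set A := a.eval ((n : ℝ) + 1)
      set B := b.eval ((n : ℝ) + 1)
      set C := c.eval ((n : ℝ) + 1)
      set D := d.eval ((n : ℝ) + 1)
      rw [hf n] at hfn
      have hxm1 : x (n - 1) < x n / r := (lt_div_iff₀ hr).mpr (by linarith [h2, mul_comm r (x (n-1))])
      have hDr : 0 < D * r := mul_pos hd1 hr
      have hkey : r < A / B - C / (D * r) := by
        rw [div_sub_div A C hb1.ne' hDr.ne', lt_div_iff₀ (mul_pos hb1 hDr)]
        have hid : (2 * b.leadingCoeff / a.leadingCoeff) * r = 1 := by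
          rw [hrdef]; field_simp
        have h3 : (2 * b.leadingCoeff / a.leadingCoeff) * r * (B * C) = B * C := by
          rw [hid, one_mul]
        nlinarith [mul_pos hfn hr, h3]
      have hcd : 0 < C / D := div_pos hc1 hd1
      have hstep : C / D * x (n - 1) < C / D * (x n / r) :=
        mul_lt_mul_of_pos_left hxm1 hcd
      have e1 : A / B * x n - C / D * (x n / r) = (A / B - C / (D * r)) * x n := by
        field_simp
      have hfin : (A / B - C / (D * r)) * x n > r * x n :=
        mul_lt_mul_of_pos_right hkey hxn
      linarith [hxineq, hstep, e1, hfin]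
  intro n hn
  obtain ⟨h1, h2⟩ := key n hn
  exact ⟨h1, (lt_div_iff₀ h1).mpr (by linarith [mul_comm r (x (n-1))])⟩
end

section
/- For every real Δ with 1/8 ≤ Δ ≤ 1/2 and every natural number n, the Wilson polynomial value P_n((7−2Δ)/6, (4−2Δ)/6, −(1−2Δ)/6, (5+2Δ)/6; (1+4Δ)/6) is strictly positive. -/
/-- Pochhammer symbol `(x)_m = x(x+1)⋯(x+m−1)`, with `(x)_0 = 1`. -/
noncomputable def poch (x : ℝ) : ℕ → ℝ
  | 0 => 1
  | m + 1 => poch x m * (x + m)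

lemma poch_zero (x : ℝ) : poch x 0 = 1 := rfl
lemma poch_succ (x : ℝ) (m : ℕ) : poch x (m+1) = poch x m * (x + m) := rfl

lemma poch_front (x : ℝ) (m : ℕ) : poch x (m+1) = x * poch (x+1) m := by
  induction m with
  | zero => simp [poch]
  | succ m ih => rw [poch_succ, ih, poch_succ]; push_cast; ring


lemma poch_add (x : ℝ) (m n : ℕ) : poch x (m+n) = poch x m * poch (x + m) n := by
  induction n with
  | zero => simp [poch]
  | succ n ih =>
    rw [show m + (n+1) = (m+n)+1 from rfl, poch_succ, ih, poch_succ]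
    push_cast; ring

noncomputable def saalT (B C D : ℝ) (M k : ℕ) : ℝ :=
  (Nat.choose M k : ℝ) * poch (D - B) k * poch (D - C) k *
    (poch (B + C - D) (M - k) * poch (D + k) (M - k))

noncomputable def saalG (B C D : ℝ) (m k : ℕ) : ℝ :=
  (k : ℝ) * ((B + C - D) + m - k) * saalT B C D m k

lemma saal (B C D : ℝ) (m : ℕ) :
    poch B m * poch C m = ∑ k ∈ Finset.range (m+1), saalT B C D m k := by
  induction m with
  | zero => simp [poch, saalT]
  | succ m ih =>
    have hG0 : saalG B C D m 0 = 0 := by simp [saalG]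
    have hGend : saalG B C D m (m+1) = 0 := by
      simp [saalG, saalT, Nat.choose_eq_zero_of_lt (Nat.lt_succ_self m)]
    have pascal :
        ∑ k ∈ Finset.range (m+2), saalT B C D (m+1) k
        = ∑ k ∈ Finset.range (m+1),
            ((Nat.choose m k : ℝ) * poch (D-B) k * poch (D-C) k *
               (poch (B+C-D) (m+1-k) * poch (D+k) (m+1-k))
             + (Nat.choose m k : ℝ) * poch (D-B) (k+1) * poch (D-C) (k+1) *
               (poch (B+C-D) (m-k) * poch (D+(k+1:ℕ)) (m-k))) := by
      have e1 : ∑ k ∈ Finset.range (m+2), saalT B C D (m+1) k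
          = (∑ k ∈ Finset.range (m+1), saalT B C D (m+1) (k+1)) + saalT B C D (m+1) 0 :=
        Finset.sum_range_succ' _ _
      have e2 : ∀ k, saalT B C D (m+1) (k+1)
          = (Nat.choose m k : ℝ) * poch (D-B) (k+1) * poch (D-C) (k+1) *
              (poch (B+C-D) (m-k) * poch (D+(k+1:ℕ)) (m-k))
            + (Nat.choose m (k+1) : ℝ) * poch (D-B) (k+1) * poch (D-C) (k+1) *
              (poch (B+C-D) (m-k) * poch (D+(k+1:ℕ)) (m-k)) := by
        intro k
        simp only [saalT, Nat.succ_sub_succ, Nat.choose_succ_succ]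
        push_cast
        ring
      have e3 : ∑ k ∈ Finset.range (m+2),
            ((Nat.choose m k : ℝ) * poch (D-B) k * poch (D-C) k *
               (poch (B+C-D) (m+1-k) * poch (D+k) (m+1-k)))
          = (∑ k ∈ Finset.range (m+1),
              ((Nat.choose m (k+1) : ℝ) * poch (D-B) (k+1) * poch (D-C) (k+1) *
               (poch (B+C-D) (m+1-(k+1)) * poch (D+(k+1:ℕ)) (m+1-(k+1)))))
            + (Nat.choose m 0 : ℝ) * poch (D-B) 0 * poch (D-C) 0 *
               (poch (B+C-D) (m+1-0) * poch (D+(0:ℕ)) (m+1-0)) :=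
        Finset.sum_range_succ' _ _
      have e4 : ∑ k ∈ Finset.range (m+2),
            ((Nat.choose m k : ℝ) * poch (D-B) k * poch (D-C) k *
               (poch (B+C-D) (m+1-k) * poch (D+k) (m+1-k)))
          = ∑ k ∈ Finset.range (m+1),
            ((Nat.choose m k : ℝ) * poch (D-B) k * poch (D-C) k *
               (poch (B+C-D) (m+1-k) * poch (D+k) (m+1-k))) := by
        rw [Finset.sum_range_succ]
        simp [Nat.choose_eq_zero_of_lt (Nat.lt_succ_self m)]
      have e5 : saalT B C D (m+1) 0
          = (Nat.choose m 0 : ℝ) * poch (D-B) 0 * poch (D-C) 0 *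
               (poch (B+C-D) (m+1-0) * poch (D+(0:ℕ)) (m+1-0)) := by
        simp [saalT]
      simp only [Nat.succ_sub_succ, Nat.sub_zero, Nat.cast_zero, add_zero, Nat.choose_zero_right,
        Nat.cast_one, poch_zero, one_mul, mul_one] at e3 e5
      rw [e1, Finset.sum_congr rfl (fun k _ => e2 k), Finset.sum_add_distrib,
        Finset.sum_add_distrib, ← e4, e3, ← e5]
      ring
    have key : ∀ k ∈ Finset.range (m+1),
        (Nat.choose m k : ℝ) * poch (D-B) k * poch (D-C) k *
           (poch (B+C-D) (m+1-k) * poch (D+k) (m+1-k))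
         + (Nat.choose m k : ℝ) * poch (D-B) (k+1) * poch (D-C) (k+1) *
           (poch (B+C-D) (m-k) * poch (D+(k+1:ℕ)) (m-k))
        = (B+m)*(C+m) * saalT B C D m k + (saalG B C D m (k+1) - saalG B C D m k) := by
      intro k hk
      have hkm : k ≤ m := by
        have := Finset.mem_range.mp hk; omega
      rcases eq_or_lt_of_le hkm with heq | hlt
      · subst heq
        simp only [saalT, saalG, Nat.sub_self, Nat.succ_sub_succ,
          Nat.choose_self, Nat.choose_eq_zero_of_lt (Nat.lt_succ_self k),
          show k+1-k = 1 from by omega, show k-(k+1) = 0 from by omega, poch_zero,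
          poch_succ, Nat.cast_zero, Nat.cast_one]
        push_cast
        ring
      · obtain ⟨j, hj⟩ : ∃ j, m = k + (j+1) := ⟨m - k - 1, by omega⟩
        subst hj
        have hb : (D + ((k+1:ℕ):ℝ)) = D + (k:ℝ) + 1 := by push_cast; ring
        have p1 : poch (B+C-D) (j+2) = poch (B+C-D) j * ((B+C-D)+(j:ℝ)) * ((B+C-D)+(j:ℝ)+1) := by
          rw [poch_succ, poch_succ]; push_cast; ring
        have p2 : poch (D+(k:ℝ)) (j+2) = (D+(k:ℝ)) * (poch (D+(k:ℝ)+1) j * ((D+(k:ℝ)+1)+(j:ℝ))) := by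
          rw [poch_front, poch_succ]
        have p3 : poch (B+C-D) (j+1) = poch (B+C-D) j * ((B+C-D)+(j:ℝ)) := poch_succ _ _
        have p4 : poch (D+(k:ℝ)) (j+1) = (D+(k:ℝ)) * poch (D+(k:ℝ)+1) j := poch_front _ _
        have p5 : poch (D+((k+1:ℕ):ℝ)) (j+1) = poch (D+(k:ℝ)+1) j * ((D+(k:ℝ)+1)+(j:ℝ)) := by
          rw [hb, poch_succ]
        have p6 : poch (D+((k+1:ℕ):ℝ)) j = poch (D+(k:ℝ)+1) j := by rw [hb]
        have p7 : poch (D-B) (k+1) = poch (D-B) k * ((D-B)+(k:ℝ)) := poch_succ _ _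
        have p8 : poch (D-C) (k+1) = poch (D-C) k * ((D-C)+(k:ℝ)) := poch_succ _ _
        have hch : ((k+(j+1)).choose (k+1) : ℝ) * ((k:ℝ)+1)
            = ((k+(j+1)).choose k : ℝ) * ((j:ℝ)+1) := by
          have := Nat.choose_succ_right_eq (k+(j+1)) k
          rw [show k+(j+1)-k = j+1 from by omega] at this
          exact_mod_cast this
        have hk1 : ((k:ℝ)+1) ≠ 0 := by positivity
        have hX : ((k+(j+1)).choose (k+1) : ℝ)
            = ((k+(j+1)).choose k : ℝ) * ((j:ℝ)+1) / ((k:ℝ)+1) := by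
          field_simp
          linear_combination hch
        simp only [saalT, saalG, show k+(j+1)+1-k = j+2 from by omega,
          show k+(j+1)-k = j+1 from by omega, show k+(j+1)-(k+1) = j from by omega,
          p1, p2, p3, p4, p5, p6, p7, p8, hX]
        push_cast
        field_simp
        ring
    calc poch B (m+1) * poch C (m+1)
        = (B+(m:ℝ))*(C+(m:ℝ)) * (poch B m * poch C m) := by
          rw [poch_succ, poch_succ]; ring
      _ = ∑ k ∈ Finset.range (m+1),
            ((B+(m:ℝ))*(C+(m:ℝ)) * saalT B C D m k
              + (saalG B C D m (k+1) - saalG B C D m k)) := by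
          rw [Finset.sum_add_distrib, Finset.sum_range_sub (saalG B C D m), hGend, hG0,
            ← Finset.mul_sum, ih]
          ring
      _ = ∑ k ∈ Finset.range (m+1),
            ((Nat.choose m k : ℝ) * poch (D-B) k * poch (D-C) k *
               (poch (B+C-D) (m+1-k) * poch (D+k) (m+1-k))
             + (Nat.choose m k : ℝ) * poch (D-B) (k+1) * poch (D-C) (k+1) *
               (poch (B+C-D) (m-k) * poch (D+(k+1:ℕ)) (m-k))) :=
          (Finset.sum_congr rfl key).symm
      _ = ∑ k ∈ Finset.range (m+2), saalT B C D (m+1) k := pascal.symm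

lemma poch_congr {x y : ℝ} (h : x = y) (m : ℕ) : poch x m = poch y m := by rw [h]

lemma poch_reflect' (x : ℝ) (m : ℕ) : poch x m = (-1)^m * poch (1 - x - m) m := by
  induction m generalizing x with
  | zero => simp [poch]
  | succ m ih =>
    have h : (1 : ℝ) - x - (m+1 : ℕ) + 1 = 1 - x - m := by push_cast; ring
    rw [poch_succ, ih x, poch_front, h]
    push_cast; ring

lemma sum_triangle (F : ℕ → ℕ → ℝ) (n : ℕ) :
    ∑ m ∈ Finset.range (n+1), ∑ k ∈ Finset.range (m+1), F m k
    = ∑ k ∈ Finset.range (n+1), ∑ j ∈ Finset.range (n+1-k), F (k+j) k := by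
  induction n with
  | zero => simp
  | succ n ih =>
    rw [Finset.sum_range_succ, ih]
    have h1 : ∑ k ∈ Finset.range (n+2), ∑ j ∈ Finset.range (n+2-k), F (k+j) k
        = (∑ k ∈ Finset.range (n+1), ∑ j ∈ Finset.range (n+2-k), F (k+j) k)
          + F (n+1) (n+1) := by
      rw [Finset.sum_range_succ]
      congr 1
      rw [show n+2-(n+1) = 1 from by omega]
      simp
    have h2 : ∀ k ∈ Finset.range (n+1), ∑ j ∈ Finset.range (n+2-k), F (k+j) k
        = (∑ j ∈ Finset.range (n+1-k), F (k+j) k) + F (n+1) k := by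
      intro k hk
      have hk' : k ≤ n := by have := Finset.mem_range.mp hk; omega
      rw [show n+2-k = (n+1-k)+1 from by omega, Finset.sum_range_succ,
        show k + (n+1-k) = n+1 from by omega]
    rw [show (n+1+1) = n+2 from rfl, h1, Finset.sum_congr rfl h2, Finset.sum_add_distrib,
      Finset.sum_range_succ (fun k => F (n+1) k)]
    ring

lemma inner_eval (Δ : ℝ) (k N : ℕ) :
    ∑ j ∈ Finset.range (N+1),
      (-1)^j * ((N.choose j : ℝ) * poch ((1-Δ)+(k:ℝ)) j * poch ((N:ℝ)+(k:ℝ)+1+Δ) j *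
        (poch (1+((k:ℝ)+(j:ℝ))) (N-j) * poch (2+((k:ℝ)+(j:ℝ))) (N-j)))
    = poch Δ N * poch (1+Δ) N := by
  have hs := saal Δ (-(N:ℝ)-Δ) (1+(k:ℝ)) N
  have e : ∀ j ∈ Finset.range (N+1), saalT Δ (-(N:ℝ)-Δ) (1+(k:ℝ)) N j
      = (-1)^(N-j) * ((N.choose j : ℝ) * poch ((1-Δ)+(k:ℝ)) j * poch ((N:ℝ)+(k:ℝ)+1+Δ) j *
        (poch (1+((k:ℝ)+(j:ℝ))) (N-j) * poch (2+((k:ℝ)+(j:ℝ))) (N-j))) := by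
    intro j hj
    have hjN : j ≤ N := by have := Finset.mem_range.mp hj; omega
    have c1 : (1+(k:ℝ)) - Δ = (1-Δ)+(k:ℝ) := by ring
    have c2 : (1+(k:ℝ)) - (-(N:ℝ)-Δ) = (N:ℝ)+(k:ℝ)+1+Δ := by ring
    have c3 : (1+(k:ℝ)) + (j:ℝ) = 1+((k:ℝ)+(j:ℝ)) := by ring
    have c4b : (1 : ℝ) - (Δ + (-(N:ℝ)-Δ) - (1+(k:ℝ))) - ((N-j : ℕ):ℝ)
        = 2+((k:ℝ)+(j:ℝ)) := by
      push_cast [Nat.cast_sub hjN]; ring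
    simp only [saalT]
    rw [c1, c2, c3, poch_reflect' (Δ + (-(N:ℝ)-Δ) - (1+(k:ℝ))) (N-j), c4b]
    ring
  rw [Finset.sum_congr rfl e] at hs
  have r2 : poch (-(N:ℝ)-Δ) N = (-1)^N * poch (1+Δ) N := by
    rw [poch_reflect' (-(N:ℝ)-Δ) N, show (1:ℝ) - (-(N:ℝ)-Δ) - (N:ℝ) = 1+Δ from by ring]
  rw [r2] at hs
  have sgn : ∀ j ∈ Finset.range (N+1),
      (-1:ℝ)^j * ((N.choose j : ℝ) * poch ((1-Δ)+(k:ℝ)) j * poch ((N:ℝ)+(k:ℝ)+1+Δ) j *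
        (poch (1+((k:ℝ)+(j:ℝ))) (N-j) * poch (2+((k:ℝ)+(j:ℝ))) (N-j)))
      = (-1:ℝ)^N * ((-1)^(N-j) * ((N.choose j : ℝ) * poch ((1-Δ)+(k:ℝ)) j *
          poch ((N:ℝ)+(k:ℝ)+1+Δ) j *
        (poch (1+((k:ℝ)+(j:ℝ))) (N-j) * poch (2+((k:ℝ)+(j:ℝ))) (N-j)))) := by
    intro j hj
    have hjN : j ≤ N := by have := Finset.mem_range.mp hj; omega
    have hN : N = (N-j) + j := by omega
    have h2 : (-1:ℝ)^(N-j) * (-1:ℝ)^(N-j) = 1 := by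
      rw [← pow_add]; exact Even.neg_one_pow ⟨N-j, rfl⟩
    have h4 : (-1:ℝ)^N * (-1:ℝ)^(N-j) = (-1:ℝ)^j := by
      have h1 : (-1:ℝ)^N = (-1:ℝ)^(N-j) * (-1:ℝ)^j := by
        conv_lhs => rw [hN]
        rw [pow_add]
      rw [h1]; linear_combination ((-1:ℝ)^j) * h2
    linear_combination -((N.choose j : ℝ) * poch ((1-Δ)+(k:ℝ)) j * poch ((N:ℝ)+(k:ℝ)+1+Δ) j *
      (poch (1+((k:ℝ)+(j:ℝ))) (N-j) * poch (2+((k:ℝ)+(j:ℝ))) (N-j))) * h4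
  rw [Finset.sum_congr rfl sgn, ← Finset.mul_sum, ← hs]
  have h3 : (-1:ℝ)^N * (-1:ℝ)^N = 1 := by
    rw [← pow_add]; exact Even.neg_one_pow ⟨N, rfl⟩
  linear_combination (poch Δ N * poch (1+Δ) N) * h3

noncomputable def mainG (Δ : ℝ) (n m k : ℕ) : ℝ :=
  saalT ((n:ℝ)+3/2) ((4+Δ)/3) ((11-4*Δ)/6) m k *
    ((-1)^m * (n.choose m : ℝ) * poch (1-Δ) m *
      (poch ((11-4*Δ)/6 + (m:ℝ)) (n-m) * poch (1+(m:ℝ)) (n-m) * poch (2+(m:ℝ)) (n-m)))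

set_option maxHeartbeats 1000000 in
lemma main_id (Δ : ℝ) (n : ℕ) :
    ∑ m ∈ Finset.range (n+1),
      (-1)^m * (n.choose m : ℝ) * poch ((n:ℝ)+3/2) m * poch ((4+Δ)/3) m * poch (1-Δ) m *
        (poch ((11-4*Δ)/6 + (m:ℝ)) (n-m) * poch (1+(m:ℝ)) (n-m) * poch (2+(m:ℝ)) (n-m))
    = ∑ k ∈ Finset.range (n+1),
      (n.choose k : ℝ) * poch (1-Δ) k * poch (1/2-Δ) k * poch ((n:ℝ) + (2+2*Δ)/3 - (k:ℝ)) k *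
        (poch ((11-4*Δ)/6 + (k:ℝ)) (n-k) * poch Δ (n-k) * poch (1+Δ) (n-k)) := by
  have step1 : ∀ m ∈ Finset.range (n+1),
      (-1)^m * (n.choose m : ℝ) * poch ((n:ℝ)+3/2) m * poch ((4+Δ)/3) m * poch (1-Δ) m *
        (poch ((11-4*Δ)/6 + (m:ℝ)) (n-m) * poch (1+(m:ℝ)) (n-m) * poch (2+(m:ℝ)) (n-m))
      = ∑ k ∈ Finset.range (m+1), mainG Δ n m k := by
    intro m _
    have e : (-1)^m * (n.choose m : ℝ) * poch ((n:ℝ)+3/2) m * poch ((4+Δ)/3) m * poch (1-Δ) m *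
        (poch ((11-4*Δ)/6 + (m:ℝ)) (n-m) * poch (1+(m:ℝ)) (n-m) * poch (2+(m:ℝ)) (n-m))
        = (poch ((n:ℝ)+3/2) m * poch ((4+Δ)/3) m) *
          ((-1)^m * (n.choose m : ℝ) * poch (1-Δ) m *
            (poch ((11-4*Δ)/6 + (m:ℝ)) (n-m) * poch (1+(m:ℝ)) (n-m) * poch (2+(m:ℝ)) (n-m))) := by
      ring
    rw [e, saal ((n:ℝ)+3/2) ((4+Δ)/3) ((11-4*Δ)/6) m, Finset.sum_mul]
    rfl
  rw [Finset.sum_congr rfl step1, sum_triangle (mainG Δ n) n]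
  apply Finset.sum_congr rfl
  intro k hk
  have hkn : k ≤ n := by have := Finset.mem_range.mp hk; omega
  have hj : ∀ j ∈ Finset.range ((n-k)+1), mainG Δ n (k+j) k
      = ((n.choose k : ℝ) * poch (1-Δ) k * poch (1/2-Δ) k *
          ((-1:ℝ)^k * poch ((11-4*Δ)/6 - ((n:ℝ)+3/2)) k) *
          poch ((11-4*Δ)/6 + (k:ℝ)) (n-k)) *
        ((-1)^j * (((n-k).choose j : ℝ) * poch ((1-Δ)+(k:ℝ)) j *
            poch (((n-k:ℕ):ℝ)+(k:ℝ)+1+Δ) j *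
          (poch (1+((k:ℝ)+(j:ℝ))) ((n-k)-j) * poch (2+((k:ℝ)+(j:ℝ))) ((n-k)-j)))) := by
    intro j hjr
    have hjn : j ≤ n - k := by have := Finset.mem_range.mp hjr; omega
    have hkj : k + j ≤ n := by omega
    have hch : ((n.choose (k+j)) : ℝ) * (((k+j).choose k) : ℝ)
        = (n.choose k : ℝ) * (((n-k).choose j) : ℝ) := by
      have h : n.choose (k+j) * (k+j).choose k = n.choose k * (n-k).choose (k+j-k) :=
        Nat.choose_mul (Nat.le_add_right k j)
      rw [show k+j-k = j from by omega] at h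
      exact_mod_cast h
    have hnc : (0:ℝ) < (n.choose (k+j) : ℝ) := by exact_mod_cast Nat.choose_pos hkj
    have hch2 : (((k+j).choose k : ℕ) : ℝ)
        = (n.choose k : ℝ) * (((n-k).choose j) : ℝ) / (n.choose (k+j) : ℝ) := by
      field_simp
      linear_combination hch
    have hcomb : poch ((11-4*Δ)/6 + (k:ℝ)) (n-k)
        = poch ((11-4*Δ)/6 + (k:ℝ)) j * poch ((11-4*Δ)/6 + ((k+j:ℕ):ℝ)) ((n-k)-j) := by
      rw [show n-k = j + ((n-k)-j) from by omega, poch_add,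
        poch_congr (show (11-4*Δ)/6 + (k:ℝ) + (j:ℝ) = (11-4*Δ)/6 + ((k+j:ℕ):ℝ) from by
          push_cast; ring) ((n-k)-j)]
      rw [show j + ((n-k)-j) - j = (n-k) - j from by omega]
    simp only [mainG, saalT, Nat.add_sub_cancel_left,
      show n - (k+j) = (n-k)-j from by omega]
    rw [pow_add (-1:ℝ) k j, poch_add (1-Δ) k j,
      poch_congr (show (n:ℝ)+3/2 + (4+Δ)/3 - (11-4*Δ)/6 = ((n-k:ℕ):ℝ)+(k:ℝ)+1+Δ from by
        push_cast [Nat.cast_sub hkn]; ring) j,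
      poch_congr (show (11-4*Δ)/6 - (4+Δ)/3 = 1/2-Δ from by ring) k,
      poch_congr (show (1:ℝ)+((k+j:ℕ):ℝ) = 1+((k:ℝ)+(j:ℝ)) from by push_cast; ring) ((n-k)-j),
      poch_congr (show (2:ℝ)+((k+j:ℕ):ℝ) = 2+((k:ℝ)+(j:ℝ)) from by push_cast; ring) ((n-k)-j),
      hcomb, hch2]
    field_simp
  have hF : (-1:ℝ)^k * poch ((11-4*Δ)/6 - ((n:ℝ)+3/2)) k
      = poch ((n:ℝ) + (2+2*Δ)/3 - (k:ℝ)) k := by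
    rw [poch_reflect' ((11-4*Δ)/6 - ((n:ℝ)+3/2)) k,
      poch_congr (show (1:ℝ) - ((11-4*Δ)/6 - ((n:ℝ)+3/2)) - (k:ℝ)
        = (n:ℝ)+(2+2*Δ)/3-(k:ℝ) from by push_cast; ring) k,
      ← mul_assoc, show (-1:ℝ)^k*(-1:ℝ)^k = 1 from by
        rw [← pow_add]; exact Even.neg_one_pow ⟨k, rfl⟩, one_mul]
  rw [show n+1-k = (n-k)+1 from by omega, Finset.sum_congr rfl hj, ← Finset.mul_sum,
    inner_eval Δ k (n-k), hF]
  ring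

lemma poch_pos {x : ℝ} (hx : 0 < x) (m : ℕ) : 0 < poch x m := by
  induction m with
  | zero => simp [poch]
  | succ m ih => exact mul_pos ih (by positivity)

lemma poch_nonneg {x : ℝ} (hx : 0 ≤ x) (m : ℕ) : 0 ≤ poch x m := by
  induction m with
  | zero => simp [poch]
  | succ m ih => exact mul_nonneg ih (by positivity)

lemma poch_neg_nat (n : ℕ) : ∀ m, m ≤ n →
    poch (-(n:ℝ)) m * ((n - m).factorial : ℝ) = (-1)^m * n.factorial := by
  intro m
  induction m with
  | zero => simp [poch]
  | succ m ih =>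
    intro h
    have hm : m ≤ n := Nat.le_of_succ_le h
    have h1 : (n - m) = (n - (m+1)) + 1 := by omega
    have key := ih hm
    rw [h1, Nat.factorial_succ] at key
    have hc : ((n - (m+1) : ℕ) : ℝ) = (n : ℝ) - (m + 1) := by
      push_cast [Nat.cast_sub h]; ring
    rw [poch_succ]
    push_cast [hc] at key ⊢
    linear_combination (-1 : ℝ) * key

/-- Wilson polynomial `P_n(a,b,c,d;x)` in its terminating ₄F₃ form. -/
noncomputable def wilson (a b c d x : ℝ) (n : ℕ) : ℝ :=
  ∑ m ∈ Finset.range (n + 1),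
    (poch (-(n : ℝ)) m * poch ((n : ℝ) + a + b + c + d - 1) m
      * poch (a + x) m * poch (a - x) m)
    / (poch (a + b) m * poch (a + c) m * poch (a + d) m * (m.factorial : ℝ))

theorem stmt_1 (Δ : ℝ) (h1 : 1/8 ≤ Δ) (h2 : Δ ≤ 1/2) (n : ℕ) :
    0 < wilson ((7 - 2*Δ)/6) ((4 - 2*Δ)/6) (-(1 - 2*Δ)/6) ((5 + 2*Δ)/6) ((1 + 4*Δ)/6) n := by
  have hwil : wilson ((7 - 2*Δ)/6) ((4 - 2*Δ)/6) (-(1 - 2*Δ)/6) ((5 + 2*Δ)/6) ((1 + 4*Δ)/6) n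
      = ∑ m ∈ Finset.range (n+1),
          (poch (-(n:ℝ)) m * poch ((n:ℝ)+3/2) m * poch ((4+Δ)/3) m * poch (1-Δ) m)
          / (poch ((11-4*Δ)/6) m * poch 1 m * poch 2 m * (m.factorial : ℝ)) := by
    unfold wilson
    rw [show ((7 - 2*Δ)/6 + (1 + 4*Δ)/6 : ℝ) = (4+Δ)/3 from by ring,
      show ((7 - 2*Δ)/6 - (1 + 4*Δ)/6 : ℝ) = 1-Δ from by ring,
      show ((n:ℝ) + (7 - 2*Δ)/6 + (4 - 2*Δ)/6 + -(1 - 2*Δ)/6 + (5 + 2*Δ)/6 - 1 : ℝ)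
        = (n:ℝ)+3/2 from by ring,
      show ((7 - 2*Δ)/6 + (4 - 2*Δ)/6 : ℝ) = (11-4*Δ)/6 from by ring,
      show ((7 - 2*Δ)/6 + -(1 - 2*Δ)/6 : ℝ) = (1:ℝ) from by ring,
      show ((7 - 2*Δ)/6 + (5 + 2*Δ)/6 : ℝ) = (2:ℝ) from by ring]
  have hv1 : (0:ℝ) < (11-4*Δ)/6 := by linarith
  have hKpos : 0 < poch ((11-4*Δ)/6) n * poch 1 n * poch 2 n :=
    mul_pos (mul_pos (poch_pos hv1 n) (poch_pos one_pos n)) (poch_pos two_pos n)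
  have key : (∑ m ∈ Finset.range (n+1),
          (poch (-(n:ℝ)) m * poch ((n:ℝ)+3/2) m * poch ((4+Δ)/3) m * poch (1-Δ) m)
          / (poch ((11-4*Δ)/6) m * poch 1 m * poch 2 m * (m.factorial : ℝ)))
        * (poch ((11-4*Δ)/6) n * poch 1 n * poch 2 n)
      = ∑ k ∈ Finset.range (n+1),
          (n.choose k : ℝ) * poch (1-Δ) k * poch (1/2-Δ) k * poch ((n:ℝ) + (2+2*Δ)/3 - (k:ℝ)) k *
            (poch ((11-4*Δ)/6 + (k:ℝ)) (n-k) * poch Δ (n-k) * poch (1+Δ) (n-k)) := by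
    rw [← main_id Δ n, Finset.sum_mul]
    apply Finset.sum_congr rfl
    intro m hm
    have hmn : m ≤ n := by have := Finset.mem_range.mp hm; omega
    have hd1 : poch ((11-4*Δ)/6) n = poch ((11-4*Δ)/6) m * poch ((11-4*Δ)/6 + (m:ℝ)) (n-m) := by
      have h := poch_add ((11-4*Δ)/6) m (n-m)
      rw [show m+(n-m) = n from by omega] at h
      exact h
    have hd2 : poch 1 n = poch 1 m * poch (1+(m:ℝ)) (n-m) := by
      have h := poch_add 1 m (n-m)
      rw [show m+(n-m) = n from by omega] at h
      exact h
    have hd3 : poch 2 n = poch 2 m * poch (2+(m:ℝ)) (n-m) := by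
      have h := poch_add 2 m (n-m)
      rw [show m+(n-m) = n from by omega] at h
      exact h
    have h4 : poch (-(n:ℝ)) m = (-1)^m * (n.choose m : ℝ) * m.factorial := by
      have hne : ((n-m).factorial : ℝ) ≠ 0 :=
        Nat.cast_ne_zero.mpr (Nat.factorial_ne_zero _)
      apply mul_right_cancel₀ hne
      rw [poch_neg_nat n m hmn]
      have hfac : ((n.choose m : ℕ) : ℝ) * m.factorial * (n-m).factorial = n.factorial := by
        exact_mod_cast Nat.choose_mul_factorial_mul_factorial hmn
      linear_combination (-(-1:ℝ)^m) * hfac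
    have ne1 : poch ((11-4*Δ)/6) m ≠ 0 := (poch_pos hv1 m).ne'
    have ne2 : poch 1 m ≠ 0 := (poch_pos one_pos m).ne'
    have ne3 : poch 2 m ≠ 0 := (poch_pos two_pos m).ne'
    have ne4 : (m.factorial : ℝ) ≠ 0 := Nat.cast_ne_zero.mpr (Nat.factorial_ne_zero _)
    rw [hd1, hd2, hd3, h4]
    field_simp
  have hpos : 0 < ∑ k ∈ Finset.range (n+1),
      (n.choose k : ℝ) * poch (1-Δ) k * poch (1/2-Δ) k * poch ((n:ℝ) + (2+2*Δ)/3 - (k:ℝ)) k *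
        (poch ((11-4*Δ)/6 + (k:ℝ)) (n-k) * poch Δ (n-k) * poch (1+Δ) (n-k)) := by
    apply Finset.sum_pos'
    · intro k hk
      have hkn : k ≤ n := by have := Finset.mem_range.mp hk; omega
      have hkr : (k:ℝ) ≤ n := by exact_mod_cast hkn
      have b1 : (0:ℝ) ≤ 1-Δ := by linarith
      have b2 : (0:ℝ) ≤ 1/2-Δ := by linarith
      have b3 : (0:ℝ) ≤ (n:ℝ) + (2+2*Δ)/3 - (k:ℝ) := by linarith
      have b4 : (0:ℝ) ≤ (11-4*Δ)/6 + (k:ℝ) := by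
        have := Nat.cast_nonneg (α := ℝ) k
        linarith
      have b5 : (0:ℝ) ≤ Δ := by linarith
      have b6 : (0:ℝ) ≤ 1+Δ := by linarith
      exact mul_nonneg (mul_nonneg (mul_nonneg (mul_nonneg (Nat.cast_nonneg _)
        (poch_nonneg b1 k)) (poch_nonneg b2 k)) (poch_nonneg b3 k))
        (mul_nonneg (mul_nonneg (poch_nonneg b4 _) (poch_nonneg b5 _)) (poch_nonneg b6 _))
    · refine ⟨0, Finset.mem_range.mpr (by omega), ?_⟩
      simp only [Nat.choose_zero_right, Nat.cast_one, Nat.cast_zero, poch_zero, one_mul,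
        mul_one, Nat.sub_zero, add_zero, sub_zero]
      have c1 : 0 < poch ((11-4*Δ)/6) n := poch_pos (by linarith) n
      have c2 : 0 < poch Δ n := poch_pos (by linarith) n
      have c3 : 0 < poch (1+Δ) n := poch_pos (by linarith) n
      exact mul_pos (mul_pos c1 c2) c3
  rw [hwil, show (∑ m ∈ Finset.range (n+1),
          (poch (-(n:ℝ)) m * poch ((n:ℝ)+3/2) m * poch ((4+Δ)/3) m * poch (1-Δ) m)
          / (poch ((11-4*Δ)/6) m * poch 1 m * poch 2 m * (m.factorial : ℝ)))
      = (∑ k ∈ Finset.range (n+1),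
          (n.choose k : ℝ) * poch (1-Δ) k * poch (1/2-Δ) k * poch ((n:ℝ) + (2+2*Δ)/3 - (k:ℝ)) k *
            (poch ((11-4*Δ)/6 + (k:ℝ)) (n-k) * poch Δ (n-k) * poch (1+Δ) (n-k)))
        / (poch ((11-4*Δ)/6) n * poch 1 n * poch 2 n) from by
    rw [eq_div_iff hKpos.ne']
    exact key]
  exact div_pos hpos hKpos
end
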